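/- For every d ≥ 1, the d² × d² matrix R_d = (I ⊗ F_d) · C²_{X,d} · (I ⊗ F_d†) is a diagonal unitary matrix, and R_d satisfies the algebraic Yang–Baxter equation R₁₂R₁₃R₂₃ = R₂₃R₁₃R₁₂ (with R = R_d). -/

import Mathlib

open Matrix
open scoped Kronecker

/-- The `d × d` increment (cyclic shift) gate: entry `(i, j)` is `1` iff `i ≡ j + 1 (mod d)`. -/
def Xgate (d : ℕ) : Matrix (Fin d) (Fin d) ℂ :=
  Matrix.of fun i j => if (i : ℕ) = ((j : ℕ) + 1) % d then 1 else 0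

/-- The `d × d` discrete Fourier transform matrix, `(F_d)_{jk} = ω^{jk}/√d` with
`ω = e^{2πi/d}`. -/
noncomputable def Fourier (d : ℕ) : Matrix (Fin d) (Fin d) ℂ :=
  Matrix.of fun j k =>
    Complex.exp (2 * Real.pi * Complex.I * (j : ℕ) * (k : ℕ) / d) / (Real.sqrt d : ℂ)

/-- The controlled increment gate `C²_{X,d}` as a `d² × d²` matrix acting on `ℂ^d ⊗ ℂ^d`:
block diagonal with `d` diagonal blocks of size `d`, all the identity except the second
block, which is `X_d`. -/
def CInc2 (d : ℕ) : Matrix (Fin d × Fin d) (Fin d × Fin d) ℂ :=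
  Matrix.of fun p q =>
    if p.1 = q.1 then
      if (p.1 : ℕ) = 1 then Xgate d p.2 q.2 else if p.2 = q.2 then 1 else 0
    else 0

/-- `R_d = (I ⊗ F_d) C²_{X,d} (I ⊗ F_d†)`. -/
noncomputable def Rd (d : ℕ) : Matrix (Fin d × Fin d) (Fin d × Fin d) ℂ :=
  ((1 : Matrix (Fin d) (Fin d) ℂ) ⊗ₖ Fourier d) * CInc2 d *
    ((1 : Matrix (Fin d) (Fin d) ℂ) ⊗ₖ (Fourier d)ᴴ)

/-- The swap operator `P : e_i ⊗ e_j ↦ e_j ⊗ e_i` on `ℂ^d ⊗ ℂ^d`. -/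
def swapP (d : ℕ) : Matrix (Fin d × Fin d) (Fin d × Fin d) ℂ :=
  Matrix.of fun p q => if p.1 = q.2 ∧ p.2 = q.1 then 1 else 0

/-- The algebraic Yang–Baxter equation `R₁₂ R₁₃ R₂₃ = R₂₃ R₁₃ R₁₂` for a `d² × d²` matrix
acting on `ℂ^d ⊗ ℂ^d`, with tensor factors identified via the canonical associativity
reindexing. Here `R₁₂ = R ⊗ I`, `R₂₃ = I ⊗ R` and `R₁₃ = (I ⊗ P)(R ⊗ I)(I ⊗ P)`. -/
def aYBE {d : ℕ} (R : Matrix (Fin d × Fin d) (Fin d × Fin d) ℂ) : Prop :=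
  let e := Equiv.prodAssoc (Fin d) (Fin d) (Fin d)
  let R12 := Matrix.reindex e e (R ⊗ₖ (1 : Matrix (Fin d) (Fin d) ℂ))
  let R23 := (1 : Matrix (Fin d) (Fin d) ℂ) ⊗ₖ R
  let IP := (1 : Matrix (Fin d) (Fin d) ℂ) ⊗ₖ swapP d
  let R13 := IP * R12 * IP
  R12 * R13 * R23 = R23 * R13 * R12

/-- For every `d ≥ 1`, `R_d = (I ⊗ F_d) C²_{X,d} (I ⊗ F_d†)` is a diagonal unitary matrix
satisfying the algebraic Yang–Baxter equation. -/
lemma exp_natmod (d b n : ℕ) (hd : 0 < d) :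
    Complex.exp (2 * Real.pi * Complex.I * b * ((n % d : ℕ) : ℂ) / d)
      = Complex.exp (2 * Real.pi * Complex.I * b * (n : ℂ) / d) := by
  have hdc : (d : ℂ) ≠ 0 := Nat.cast_ne_zero.2 hd.ne'
  conv_rhs => rw [← Nat.mod_add_div n d]
  have h1 : Complex.exp (((b * (n / d) : ℕ) : ℂ) * (2 * Real.pi * Complex.I)) = 1 := by
    have := Complex.exp_int_mul_two_pi_mul_I ((b * (n / d) : ℕ) : ℤ)
    push_cast at this ⊢
    exact this
  rw [show ((((n % d + d * (n / d)) : ℕ) : ℂ)) = ((n % d : ℕ) : ℂ) + (d : ℂ) * ((n / d : ℕ) : ℂ) by push_cast; ring]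
  rw [show (2 * (Real.pi : ℂ) * Complex.I * b * (((n % d : ℕ) : ℂ) + (d:ℂ) * ((n / d : ℕ):ℂ)) / d)
      = 2 * (Real.pi:ℂ) * Complex.I * b * ((n % d : ℕ):ℂ) / d + ((b * (n / d) : ℕ) : ℂ) * (2 * Real.pi * Complex.I) by
    push_cast; field_simp]
  rw [Complex.exp_add, h1, mul_one]

lemma Fourier_mul_conjTranspose (d : ℕ) (hd : 1 ≤ d) :
    Fourier d * (Fourier d)ᴴ = 1 := by
  have hd0 : 0 < d := hd
  have hdc : (d : ℂ) ≠ 0 := Nat.cast_ne_zero.2 hd0.ne'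
  have hs : ((Real.sqrt d : ℂ)) * (Real.sqrt d : ℂ) = (d : ℂ) := by
    rw [← Complex.ofReal_mul, Real.mul_self_sqrt (Nat.cast_nonneg d)]
    simp
  ext j k
  rw [Matrix.mul_apply]
  simp only [Fourier, Matrix.conjTranspose_apply, Matrix.of_apply, Matrix.one_apply]
  have hterm : ∀ m : Fin d,
      Complex.exp (2 * Real.pi * Complex.I * (j : ℕ) * (m : ℕ) / d) / (Real.sqrt d : ℂ) *
        star (Complex.exp (2 * Real.pi * Complex.I * (k : ℕ) * (m : ℕ) / d) / (Real.sqrt d : ℂ))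
      = Complex.exp (2 * Real.pi * Complex.I * ((j : ℕ) - (k : ℕ)) / d) ^ (m : ℕ) / d := by
    intro m
    have hstar : star (Complex.exp (2 * Real.pi * Complex.I * (k : ℕ) * (m : ℕ) / d) / (Real.sqrt d : ℂ))
        = Complex.exp (-(2 * Real.pi * Complex.I * (k : ℕ) * (m : ℕ) / d)) / (Real.sqrt d : ℂ) := by
      rw [star_div₀, Complex.star_def, ← Complex.exp_conj, Complex.conj_ofReal]
      congr 1
      simp [map_div₀, Complex.conj_I, map_ofNat]
      ring_nf
    rw [hstar, div_mul_div_comm, ← Complex.exp_add, hs, ← Complex.exp_nat_mul]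
    congr 2
    field_simp
    ring
  rw [Finset.sum_congr rfl fun m _ => hterm m]
  rw [← Finset.sum_div]
  by_cases hjk : j = k
  · subst hjk
    simp only [sub_self, mul_zero, zero_div, Complex.exp_zero, one_pow]
    simp [Finset.sum_const, Finset.card_univ, hdc]
  · have h2pi : (2 * (Real.pi : ℂ) * Complex.I) ≠ 0 := by
      simp [Real.pi_ne_zero, Complex.I_ne_zero]
    have hz1 : Complex.exp (2 * Real.pi * Complex.I * ((j : ℕ) - (k : ℕ)) / d) ≠ 1 := by
      intro h
      rw [Complex.exp_eq_one_iff] at h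
      obtain ⟨n, hn⟩ := h
      have key : (2*(Real.pi:ℂ)*Complex.I) * (((j:ℕ):ℂ) - ((k:ℕ):ℂ)) = (2*(Real.pi:ℂ)*Complex.I) * ((n:ℂ) * (d:ℂ)) := by
        field_simp at hn
        linear_combination (2*(Real.pi:ℂ)*Complex.I) * hn
      have hjk' : ((j:ℕ):ℂ) - ((k:ℕ):ℂ) = (n:ℂ) * (d:ℂ) := mul_left_cancel₀ h2pi key
      have hint : ((j:ℕ):ℤ) - ((k:ℕ):ℤ) = n * (d:ℤ) := by exact_mod_cast hjk'
      have hj : ((j:ℕ):ℤ) < d := by exact_mod_cast j.isLt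
      have hk : ((k:ℕ):ℤ) < d := by exact_mod_cast k.isLt
      have hne : ((j:ℕ):ℤ) ≠ ((k:ℕ):ℤ) := fun h => hjk (Fin.ext (by exact_mod_cast h))
      have hd' : (0:ℤ) < d := by exact_mod_cast hd0
      have hj0 : (0:ℤ) ≤ ((j:ℕ):ℤ) := Int.ofNat_nonneg _
      have hk0 : (0:ℤ) ≤ ((k:ℕ):ℤ) := Int.ofNat_nonneg _
      have hn1 : n < 1 := by nlinarith
      have hn2 : -1 < n := by nlinarith
      have hn0 : n = 0 := by omega
      subst hn0
      simp at hint
      omega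
    have hzd : Complex.exp (2 * Real.pi * Complex.I * ((j : ℕ) - (k : ℕ)) / d) ^ d = 1 := by
      rw [← Complex.exp_nat_mul]
      have := Complex.exp_int_mul_two_pi_mul_I (((j:ℕ):ℤ) - ((k:ℕ):ℤ))
      rw [← this]
      congr 1
      push_cast
      field_simp
    rw [Fin.sum_univ_eq_sum_range (fun i => Complex.exp (2 * Real.pi * Complex.I * ((j:ℕ) - (k:ℕ)) / d) ^ i) d]
    rw [geom_sum_eq hz1, hzd, sub_self, zero_div, zero_div]
    simp [hjk]

noncomputable def dvec (d : ℕ) : Fin d × Fin d → ℂ :=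
  fun p => if (p.1 : ℕ) = 1 then Complex.exp (2 * Real.pi * Complex.I * (p.2 : ℕ) / d) else 1

lemma key_comm (d : ℕ) (hd : 1 ≤ d) :
    ((1 : Matrix (Fin d) (Fin d) ℂ) ⊗ₖ Fourier d) * CInc2 d
      = Matrix.diagonal (dvec d) * ((1 : Matrix (Fin d) (Fin d) ℂ) ⊗ₖ Fourier d) := by
  have hd0 : 0 < d := hd
  ext ⟨a, b⟩ ⟨r, s⟩
  rw [Matrix.mul_apply, Matrix.diagonal_mul]
  by_cases har : a = r
  · subst har
    by_cases ha1 : (a : ℕ) = 1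
    · rw [Finset.sum_eq_single ((a, (⟨(s + 1) % d, Nat.mod_lt _ hd0⟩ : Fin d)) : Fin d × Fin d)]
      · simp only [kroneckerMap_apply, Matrix.one_apply_eq, one_mul, CInc2, Matrix.of_apply,
          if_pos rfl, ha1, if_true, Xgate]
        simp only [Fourier, Matrix.of_apply, dvec, ha1, if_true, ite_true, if_pos rfl]
        rw [exp_natmod d b (s + 1) hd0, mul_one, ← mul_div_assoc, ← Complex.exp_add]
        congr 2
        push_cast
        field_simp
        ring
      · rintro ⟨p, q⟩ - hne
        by_cases hp : a = p
        · subst hp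
          have hq : (q : ℕ) ≠ (s + 1) % d := by
            intro h
            apply hne
            ext
            · rfl
            · exact h
          simp [CInc2, Xgate, ha1, hq]
        · simp [Matrix.one_apply, hp]
      · intro h
        exact absurd (Finset.mem_univ _) h
    · rw [Finset.sum_eq_single ((a, s) : Fin d × Fin d)]
      · simp [CInc2, ha1, dvec]
      · rintro ⟨p, q⟩ - hne
        by_cases hp : a = p
        · subst hp
          have hq : q ≠ s := by
            intro h; exact hne (by rw [h])
          simp [CInc2, ha1, hq]
        · simp [Matrix.one_apply, hp]
      · intro h
        exact absurd (Finset.mem_univ _) h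
  · rw [Finset.sum_eq_zero]
    · simp [kroneckerMap_apply, Matrix.one_apply, har]
    · rintro ⟨p, q⟩ -
      by_cases hp : a = p
      · subst hp
        simp [CInc2, har]
      · simp [Matrix.one_apply, hp]

lemma Rd_eq_diagonal (d : ℕ) (hd : 1 ≤ d) : Rd d = Matrix.diagonal (dvec d) := by
  rw [Rd, key_comm d hd, mul_assoc, ← Matrix.mul_kronecker_mul,
    Fourier_mul_conjTranspose d hd, Matrix.one_mul, Matrix.one_kronecker_one, Matrix.mul_one]

lemma Rd_unitary (d : ℕ) (hd : 1 ≤ d) : Rd d * (Rd d)ᴴ = 1 := by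
  rw [Rd_eq_diagonal d hd, Matrix.diagonal_conjTranspose, Matrix.diagonal_mul_diagonal]
  have hv : ∀ p : Fin d × Fin d, dvec d p * (starRingEnd ℂ) (dvec d p) = 1 := by
    intro p
    simp only [dvec]
    by_cases h1 : (p.1 : ℕ) = 1
    · simp only [h1, if_true, ite_true]
      rw [← Complex.exp_conj, ← Complex.exp_add]
      rw [show (starRingEnd ℂ) (2 * Real.pi * Complex.I * ((p.2 : ℕ) : ℂ) / d)
          = -(2 * Real.pi * Complex.I * ((p.2 : ℕ) : ℂ) / d) by
        simp only [map_div₀, _root_.map_mul, Complex.conj_I, Complex.conj_ofReal,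
          map_natCast, map_ofNat]
        ring]
      simp
    · simp [h1]
  ext p q
  rw [Matrix.diagonal_apply, Matrix.one_apply]
  by_cases h : p = q <;> simp [h, hv]

lemma Rd_aYBE (d : ℕ) (hd : 1 ≤ d) : aYBE (Rd d) := by
  have hR := Rd_eq_diagonal d hd
  unfold aYBE
  dsimp only
  set e := Equiv.prodAssoc (Fin d) (Fin d) (Fin d) with he
  set σ : Fin d × (Fin d × Fin d) ≃ Fin d × (Fin d × Fin d) :=
    (Equiv.refl (Fin d)).prodCongr (Equiv.prodComm (Fin d) (Fin d)) with hσ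
  have hIP : (1 : Matrix (Fin d) (Fin d) ℂ) ⊗ₖ swapP d = σ.toPEquiv.toMatrix := by
    ext ⟨a, b, c⟩ ⟨a', b', c'⟩
    simp only [kroneckerMap_apply, Matrix.one_apply, swapP, Matrix.of_apply,
      PEquiv.toMatrix_apply, Equiv.toPEquiv_apply, Option.mem_def, Option.some_inj, hσ,
      Equiv.prodCongr_apply, Equiv.coe_refl, Prod.map, Equiv.prodComm_apply, Prod.swap, id,
      Prod.mk.injEq]
    by_cases h1 : a = a' <;> by_cases h2 : b = c' <;> by_cases h3 : c = b' <;>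
      simp [h1, h2, h3, eq_comm]
  have h12 : Matrix.reindex e e (Rd d ⊗ₖ (1 : Matrix (Fin d) (Fin d) ℂ))
      = Matrix.diagonal (fun x => dvec d (x.1, x.2.1)) := by
    rw [hR, ← Matrix.diagonal_one, Matrix.diagonal_kronecker_diagonal, Matrix.reindex_apply,
      Matrix.submatrix_diagonal_equiv]
    exact congrArg Matrix.diagonal (funext fun x => by simp [he, Equiv.prodAssoc])
  have h23 : (1 : Matrix (Fin d) (Fin d) ℂ) ⊗ₖ Rd d
      = Matrix.diagonal (fun x : Fin d × (Fin d × Fin d) => dvec d x.2) := by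
    rw [hR, ← Matrix.diagonal_one, Matrix.diagonal_kronecker_diagonal]
    exact congrArg Matrix.diagonal (funext fun x => by simp)
  have h13 : σ.toPEquiv.toMatrix * Matrix.diagonal (fun x : Fin d × (Fin d × Fin d) => dvec d (x.1, x.2.1)) * σ.toPEquiv.toMatrix
      = Matrix.diagonal (fun x : Fin d × (Fin d × Fin d) => dvec d (x.1, x.2.2)) := by
    rw [PEquiv.toMatrix_toPEquiv_mul, PEquiv.mul_toMatrix_toPEquiv, Matrix.submatrix_submatrix]
    rw [show (⇑σ ∘ id) = ⇑σ from rfl, show (id ∘ ⇑σ.symm) = ⇑σ from rfl]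
    rw [Matrix.submatrix_diagonal _ σ σ.injective]
    rfl
  rw [hIP, h12, h23, h13]
  rw [Matrix.diagonal_mul_diagonal, Matrix.diagonal_mul_diagonal,
    Matrix.diagonal_mul_diagonal, Matrix.diagonal_mul_diagonal]
  exact congrArg Matrix.diagonal (funext fun x => by ring)

theorem Rd_diag_unitary_aYBE (d : ℕ) (hd : 1 ≤ d) :
    (Rd d).IsDiag ∧ Rd d * (Rd d)ᴴ = 1 ∧ aYBE (Rd d) := by
  refine ⟨?_, Rd_unitary d hd, Rd_aYBE d hd⟩
  rw [Rd_eq_diagonal d hd]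
  exact Matrix.isDiag_diagonal _
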